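/- Let M be a nonzero R-module with Rad(M) = 0 and finite hollow dimension. Then M is a finitely generated semisimple module. -/

import Mathlib

/-- A submodule `N` of `M` is small (superfluous): `N + A = M` implies `A = M`. -/
def IsSmallSubmodule {R M : Type*} [Ring R] [AddCommGroup M] [Module R M]
    (N : Submodule R M) : Prop :=
  ∀ A : Submodule R M, N ⊔ A = ⊤ → A = ⊤

/-- `M` is an fs-module: it has only finitely many small submodules. -/
def IsFsModule (R M : Type*) [Ring R] [AddCommGroup M] [Module R M] : Prop :=
  {N : Submodule R M | IsSmallSubmodule N}.Finite

/-- The radical of `M`, as the sum of all small submodules of `M`. -/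
def modRad (R M : Type*) [Ring R] [AddCommGroup M] [Module R M] : Submodule R M :=
  sSup {N : Submodule R M | IsSmallSubmodule N}

/-- The radical of `M`, as the intersection of all maximal submodules of `M`. -/
def modRad' (R M : Type*) [Ring R] [AddCommGroup M] [Module R M] : Submodule R M :=
  sInf {N : Submodule R M | IsCoatom N}

/-- The socle of `M`: the sum of all minimal (simple) submodules of `M`. -/
def modSoc (R M : Type*) [Ring R] [AddCommGroup M] [Module R M] : Submodule R M :=
  sSup {N : Submodule R M | IsAtom N}

/-- `M` has finite hollow dimension: for every descending chain `N₁ ⊇ N₂ ⊇ ⋯`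
there is `n` such that `Nₙ / N_k` is small in `M / N_k` for all `k ≥ n`. -/
def HasFiniteHollowDim (R M : Type*) [Ring R] [AddCommGroup M] [Module R M] : Prop :=
  ∀ N : ℕ → Submodule R M, (∀ i j, i ≤ j → N j ≤ N i) →
    ∃ n, ∀ k, n ≤ k → IsSmallSubmodule (Submodule.map (N k).mkQ (N n))

/-- `M` has finite Goldie dimension: it contains no infinite direct sum of
nonzero submodules. -/
def HasFiniteGoldieDim (R M : Type*) [Ring R] [AddCommGroup M] [Module R M] : Prop :=
  ¬ ∃ f : ℕ → Submodule R M, (∀ i, f i ≠ ⊥) ∧ iSupIndep f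

lemma pi_semisimple {R ι : Type*} [Ring R] [Finite ι] [DecidableEq ι] (φ : ι → Type*)
    [∀ i, AddCommGroup (φ i)] [∀ i, Module R (φ i)] [∀ i, IsSemisimpleModule R (φ i)] :
    IsSemisimpleModule R (∀ i, φ i) := by
  refine isSemisimpleModule_of_isSemisimpleModule_submodule'
    (p := fun i => LinearMap.range (LinearMap.single R φ i))
    (fun i => ?_) (LinearMap.iSup_range_single R φ)
  exact IsSemisimpleModule.range _

theorem semisimple_of_rad_zero_finite_hollow (R M : Type*) [Ring R] [AddCommGroup M]
    [Module R M] [Nontrivial M] (hrad : modRad' R M = ⊥)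
    (hh : HasFiniteHollowDim R M) :
    IsSemisimpleModule R M ∧ Module.Finite R M := by
  classical
  -- the set of finite intersections of coatoms
  set S : Set (Submodule R M) :=
    {N | ∃ s : Finset (Submodule R M), (∀ K ∈ s, IsCoatom K) ∧ N = s.inf id} with hS
  -- every nonzero member of S is not below some coatom
  have hstep : ∀ N ∈ S, N ≠ ⊥ → ∃ K, IsCoatom K ∧ ¬ N ≤ K := by
    intro N _ hN
    by_contra h
    push_neg at h
    exact hN (le_bot_iff.mp (hrad ▸ le_sInf fun K hK => h K hK))
  have hbot : (⊥ : Submodule R M) ∈ S := by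
    by_contra hb
    -- choice of coatom for each chain element
    have hch : ∀ N : {N // N ∈ S}, ∃ K, IsCoatom K ∧ ¬ (N : Submodule R M) ≤ K := by
      intro ⟨N, hN⟩
      refine hstep N hN fun h => hb (h ▸ hN)
    choose c hc1 hc2 using hch
    -- next element stays in S
    have hnext : ∀ N : {N // N ∈ S}, (N : Submodule R M) ⊓ c N ∈ S := by
      rintro ⟨N, s, hs, rfl⟩
      refine ⟨insert (c ⟨s.inf id, s, hs, rfl⟩) s, ?_, ?_⟩
      · intro K hK
        rcases Finset.mem_insert.mp hK with h | h
        · exact h ▸ hc1 _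
        · exact hs K h
      · simp [Finset.inf_insert, inf_comm]
    set f : ℕ → {N // N ∈ S} := fun n => Nat.rec ⟨⊤, ∅, by simp, by simp⟩
      (fun _ N => ⟨(N : Submodule R M) ⊓ c N, hnext N⟩) n with hf
    have hfsucc : ∀ n, (f (n+1) : Submodule R M) = (f n : Submodule R M) ⊓ c (f n) := fun n => rfl
    have hanti : ∀ i j, i ≤ j → (f j : Submodule R M) ≤ (f i : Submodule R M) := by
      intro i j hij
      induction j with
      | zero => simpa [Nat.le_zero.mp hij] using le_refl _
      | succ j ih =>
        rcases Nat.lt_or_ge i (j+1) with h | h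
        · exact le_trans (by rw [hfsucc]; exact inf_le_left) (ih (Nat.lt_succ_iff.mp h))
        · simpa [Nat.le_antisymm hij h] using le_refl _
    clear_value f
    obtain ⟨n, hn⟩ := hh (fun k => (f k : Submodule R M)) hanti
    have hs := hn (n+1) (Nat.le_succ n)
    set K := c (f n)
    have hKcoatom : IsCoatom K := hc1 (f n)
    have hsup : K ⊔ (f n : Submodule R M) = ⊤ := hKcoatom.2 _ (left_lt_sup.2 (hc2 (f n)))
    have hmap : Submodule.map (f (n+1) : Submodule R M).mkQ (f n : Submodule R M) ⊔
        Submodule.map (f (n+1) : Submodule R M).mkQ K = ⊤ := by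
      rw [← Submodule.map_sup, sup_comm, hsup, Submodule.map_top, Submodule.range_mkQ]
    have := hs _ hmap
    rw [Submodule.map_mkQ_eq_top] at this
    have hle : (f (n+1) : Submodule R M) ≤ K := by rw [hfsucc]; exact inf_le_right
    exact hKcoatom.1 (by rwa [sup_eq_right.mpr hle] at this)
  obtain ⟨s, hcoatom, hbotinf⟩ := hbot
  -- embed M into the product of the simple quotients
  set φ : M →ₗ[R] ∀ K : s, M ⧸ (K : Submodule R M) :=
    LinearMap.pi (fun K => (K : Submodule R M).mkQ)
  have hker : LinearMap.ker φ = ⊥ := by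
    rw [LinearMap.ker_pi]
    simp only [Submodule.ker_mkQ]
    rw [eq_bot_iff, hbotinf]
    exact Finset.le_inf fun K hK => iInf_le (fun i : s => (i : Submodule R M)) ⟨K, hK⟩
  have hinj : Function.Injective φ := LinearMap.ker_eq_bot.mp hker
  haveI : ∀ K : s, IsSimpleModule R (M ⧸ (K : Submodule R M)) := fun K =>
    isSimpleModule_iff_isCoatom.mpr (hcoatom K K.2)
  haveI : IsSemisimpleModule R (∀ K : s, M ⧸ (K : Submodule R M)) :=
    pi_semisimple (fun K : s => M ⧸ (K : Submodule R M))
  refine ⟨IsSemisimpleModule.congr (LinearEquiv.ofInjective φ hinj), ?_⟩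
  haveI := isNoetherian_of_injective φ hinj
  exact ⟨IsNoetherian.noetherian ⊤⟩
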